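/- (Neglected heterogeneity bias of the Anderson–Hsiao estimator, sign) Under the stated assumptions, E[((1−φ)/(1+φ)) φ] / E[(1−φ)/(1+φ)] ≤ E(φ), and equality holds if and only if φ is almost surely equal to the constant E(φ). -/

import Mathlib

open MeasureTheory

/-- Algebraic key: monotonicity identity for `x ↦ (1-x)/(1+x)`. -/
lemma ah_key (x c : ℝ) (hx : 0 < 1 + x) (hc : 0 < 1 + c) :
    ((1 - c) / (1 + c) - (1 - x) / (1 + x)) * (x - c)
      = 2 * (x - c) ^ 2 / ((1 + c) * (1 + x)) := by
  field_simp
  ring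


/-- (Neglected heterogeneity bias of the Anderson–Hsiao estimator, sign)
`E[((1−φ)/(1+φ)) φ] / E[(1−φ)/(1+φ)] ≤ E(φ)`, and equality holds if and only if `φ` is
almost surely equal to the constant `E(φ)`. -/
theorem ah_bias_sign
    {Ω : Type*} [MeasurableSpace Ω] (P : Measure Ω) [IsProbabilityMeasure P]
    (φ : Ω → ℝ) (hφm : Measurable φ) (ε₀ : ℝ) (hε₀ : 0 < ε₀)
    (hφbd : ∀ᵐ ω ∂P, -1 + ε₀ ≤ φ ω ∧ φ ω ≤ 1)
    (hne : P {ω | φ ω = 1} < 1) :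
    (∫ ω, ((1 - φ ω) / (1 + φ ω)) * φ ω ∂P) /
        (∫ ω, (1 - φ ω) / (1 + φ ω) ∂P) ≤ ∫ ω, φ ω ∂P ∧
    ((∫ ω, ((1 - φ ω) / (1 + φ ω)) * φ ω ∂P) /
        (∫ ω, (1 - φ ω) / (1 + φ ω) ∂P) = ∫ ω, φ ω ∂P ↔
      ∀ᵐ ω ∂P, φ ω = ∫ ω', φ ω' ∂P) := by
  set w : Ω → ℝ := fun ω => (1 - φ ω) / (1 + φ ω) with hw
  set m : ℝ := ∫ ω, φ ω ∂P with hmdef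
  -- measurability
  have hwm : Measurable w := (measurable_const.sub hφm).div (measurable_const.add hφm)
  -- a.e. basic facts
  have hae : ∀ᵐ ω ∂P, ε₀ ≤ 1 + φ ω ∧ 1 - φ ω ≥ 0 := by
    filter_upwards [hφbd] with ω ⟨h1, h2⟩; constructor <;> linarith
  -- integrability of φ
  have hφi : Integrable φ P := by
    refine Integrable.mono' (integrable_const 1) hφm.aestronglyMeasurable ?_
    filter_upwards [hφbd] with ω ⟨h1, h2⟩
    rw [Real.norm_eq_abs, abs_le]; constructor <;> linarith
  -- integrability of w
  have hwbd : ∀ᵐ ω ∂P, 0 ≤ w ω ∧ w ω ≤ 2 / ε₀ := by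
    filter_upwards [hae] with ω ⟨h1, h2⟩
    have hpos : 0 < 1 + φ ω := lt_of_lt_of_le hε₀ h1
    exact ⟨div_nonneg h2 hpos.le, div_le_div₀ (by norm_num) (by linarith) hε₀ h1⟩
  have hwi : Integrable w P := by
    refine Integrable.mono' (integrable_const (2 / ε₀)) hwm.aestronglyMeasurable ?_
    filter_upwards [hwbd] with ω ⟨h1, h2⟩
    rw [Real.norm_eq_abs, abs_of_nonneg h1]; exact h2
  have hwφi : Integrable (fun ω => w ω * φ ω) P := by
    refine Integrable.mono' (integrable_const (2 / ε₀)) (hwm.mul hφm).aestronglyMeasurable ?_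
    filter_upwards [hwbd, hφbd] with ω ⟨h1, h2⟩ ⟨h3, h4⟩
    rw [Real.norm_eq_abs, abs_mul, abs_of_nonneg h1]
    calc w ω * |φ ω| ≤ (2 / ε₀) * 1 := by
          apply mul_le_mul h2 _ (abs_nonneg _) (by positivity)
          rw [abs_le]; constructor <;> linarith
      _ = 2 / ε₀ := by ring
  -- φ is not a.e. equal to 1
  have hnot1 : ¬ (∀ᵐ ω ∂P, φ ω = 1) := by
    intro h
    have hms : MeasurableSet {ω | φ ω = 1} := hφm (measurableSet_singleton 1)
    have h0 : P {ω | ¬ φ ω = 1} = 0 := h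
    have hcm := measure_compl hms (measure_ne_top P _)
    have hcompl : {ω | φ ω = 1}ᶜ = {ω | ¬ φ ω = 1} := rfl
    rw [hcompl, h0, measure_univ] at hcm
    have hle : (1 : ENNReal) ≤ P {ω | φ ω = 1} := tsub_eq_zero_iff_le.mp hcm.symm
    exact absurd hne (not_lt.mpr hle)
  change (∫ ω, w ω * φ ω ∂P) / (∫ ω, w ω ∂P) ≤ m ∧
    ((∫ ω, w ω * φ ω ∂P) / (∫ ω, w ω ∂P) = m ↔ ∀ᵐ ω ∂P, φ ω = m)
  -- bounds on m
  have hm_le : m ≤ 1 := by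
    have : m ≤ ∫ _ω, (1 : ℝ) ∂P := by
      refine integral_mono_ae hφi (integrable_const 1) ?_
      filter_upwards [hφbd] with ω ⟨_, h2⟩; exact h2
    simpa using this
  have hm_ge : -1 + ε₀ ≤ m := by
    have : ∫ _ω, (-1 + ε₀ : ℝ) ∂P ≤ m := by
      refine integral_mono_ae (integrable_const _) hφi ?_
      filter_upwards [hφbd] with ω ⟨h1, _⟩; exact h1
    simpa using this
  have hm1 : 0 < 1 + m := by linarith
  have hm_lt : m < 1 := by
    rcases lt_or_eq_of_le hm_le with h | h
    · exact h
    · exfalso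
      apply hnot1
      have hint : ∫ ω, (1 - φ ω) ∂P = 0 := by
        rw [integral_sub (integrable_const 1) hφi]; simp [← hmdef, h]
      have hpos : 0 ≤ᵐ[P] fun ω => 1 - φ ω := by
        filter_upwards [hφbd] with ω ⟨_, h2⟩
        show (0 : ℝ) ≤ 1 - φ ω
        linarith
      have := (integral_eq_zero_iff_of_nonneg_ae hpos
        ((integrable_const 1).sub hφi)).mp hint
      filter_upwards [this] with ω hω
      have : (1 : ℝ) - φ ω = 0 := hω
      linarith
  -- ∫ w > 0
  have hwint_pos : 0 < ∫ ω, w ω ∂P := by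
    have hnn : 0 ≤ᵐ[P] w := by filter_upwards [hwbd] with ω h; exact h.1
    rcases lt_or_eq_of_le (integral_nonneg_of_ae hnn) with h | h
    · exact h
    · exfalso
      apply hnot1
      have := (integral_eq_zero_iff_of_nonneg_ae hnn hwi).mp h.symm
      filter_upwards [this, hae] with ω h0 ⟨h1, h2⟩
      have hpos : 0 < 1 + φ ω := lt_of_lt_of_le hε₀ h1
      have : (1 - φ ω) / (1 + φ ω) = 0 := h0
      have := (div_eq_zero_iff.mp this).resolve_right (ne_of_gt hpos)
      linarith
  -- the key nonnegative function
  set c : ℝ := (1 - m) / (1 + m) with hcdef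
  set f : Ω → ℝ := fun ω => (c - w ω) * (φ ω - m) with hfdef
  have hfi : Integrable f P := by
    have : f = fun ω => (c * φ ω - w ω * φ ω) + (m * w ω - c * m) := by
      funext ω; simp only [hfdef]; ring
    rw [this]
    exact ((hφi.const_mul c).sub hwφi).add ((hwi.const_mul m).sub (integrable_const _))
  have hfnn : 0 ≤ᵐ[P] f := by
    filter_upwards [hae] with ω ⟨h1, h2⟩
    have hpos : 0 < 1 + φ ω := lt_of_lt_of_le hε₀ h1
    have := ah_key (φ ω) m hpos hm1
    simp only [hfdef, hw]
    rw [show (c - (1 - φ ω) / (1 + φ ω)) * (φ ω - m)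
        = ((1 - m) / (1 + m) - (1 - φ ω) / (1 + φ ω)) * (φ ω - m) from rfl, this]
    positivity
  have hIf : ∫ ω, f ω ∂P = m * (∫ ω, w ω ∂P) - ∫ ω, w ω * φ ω ∂P := by
    have h1 : ∫ ω, f ω ∂P
        = ∫ ω, ((c * φ ω - w ω * φ ω) + (m * w ω - c * m)) ∂P := by
      apply integral_congr_ae
      filter_upwards with ω
      simp only [hfdef]; ring
    have hiA : Integrable (fun ω => c * φ ω - w ω * φ ω) P := (hφi.const_mul c).sub hwφi
    have hiB : Integrable (fun ω => m * w ω - c * m) P :=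
      (hwi.const_mul m).sub (integrable_const _)
    have hA : ∫ ω, (c * φ ω - w ω * φ ω) ∂P = c * m - ∫ ω, w ω * φ ω ∂P := by
      rw [integral_sub (hφi.const_mul c) hwφi, integral_const_mul, ← hmdef]
    have hB : ∫ ω, (m * w ω - c * m) ∂P = m * (∫ ω, w ω ∂P) - c * m := by
      rw [integral_sub (hwi.const_mul m) (integrable_const _), integral_const_mul,
        integral_const]
      simp
    rw [h1, integral_add hiA hiB, hA, hB]
    ring
  have hineq : ∫ ω, w ω * φ ω ∂P ≤ m * ∫ ω, w ω ∂P := by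
    have := integral_nonneg_of_ae hfnn
    rw [hIf] at this; linarith
  constructor
  · rw [div_le_iff₀ hwint_pos]
    linarith [hineq]
  · constructor
    · intro heq
      have h0 : ∫ ω, w ω * φ ω ∂P = m * ∫ ω, w ω ∂P := by
        rw [div_eq_iff (ne_of_gt hwint_pos)] at heq
        linarith [heq]
      have hIf0 : ∫ ω, f ω ∂P = 0 := by rw [hIf, h0]; ring
      have := (integral_eq_zero_iff_of_nonneg_ae hfnn hfi).mp hIf0
      filter_upwards [this, hae] with ω h0' ⟨h1, h2⟩
      have hpos : 0 < 1 + φ ω := lt_of_lt_of_le hε₀ h1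
      have hk := ah_key (φ ω) m hpos hm1
      have hz : (c - w ω) * (φ ω - m) = 0 := h0'
      rw [show (c - w ω) * (φ ω - m)
          = ((1 - m) / (1 + m) - (1 - φ ω) / (1 + φ ω)) * (φ ω - m) from rfl, hk] at hz
      have h2' : 2 * (φ ω - m) ^ 2 = 0 := by
        have hd : (1 + m) * (1 + φ ω) ≠ 0 := by positivity
        field_simp at hz
        rw [mul_zero] at hz
        exact hz
      have h3 : (φ ω - m) ^ 2 = 0 := by linarith
      have h4 : φ ω - m = 0 := by
        simpa using (pow_eq_zero_iff (n := 2) two_ne_zero).mp h3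
      linarith
    · intro haeq
      have hf0 : f =ᵐ[P] 0 := by
        filter_upwards [haeq] with ω hω
        simp only [hfdef, Pi.zero_apply]
        rw [show φ ω = m from hω]; ring
      have hIf0 : ∫ ω, f ω ∂P = 0 := by
        rw [integral_congr_ae hf0]; simp
      rw [hIf] at hIf0
      rw [div_eq_iff (ne_of_gt hwint_pos)]
      linarith
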